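/- arXiv:math/0409411 — 2 statements merged into one kernel-verified Lean document; each statement's English description precedes it below -/
import Mathlib

section
/- Let I be a finite set, H a finite set with maps out, inc : H → I, let (V_i)_{i∈I} and (D_i)_{i∈I} be families of finite-dimensional complex vector spaces, and let x_h : V_{out(h)} → V_{inc(h)} (h ∈ H) and t_i : V_i → D_i (i ∈ I) be linear maps such that the pair (x,t) is stable. If g_i : V_i → V_i (i ∈ I) are linear automorphisms satisfying g_{inc(h)} ∘ x_h = x_h ∘ g_{out(h)} for all h ∈ H and t_i ∘ g_i = t_i for all i ∈ I, then g_i = id_{V_i} for all i ∈ I. (That is, the stabilizer in G_V = ∏_i GL(V_i) of any stable point (x,t) is trivial.) -/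
/-- A pair `(x, t)` of quiver data is *stable* if the only family of subspaces
`S i ⊆ V i` with `x h (S (out h)) ⊆ S (inc h)` for all `h` and `t i (S i) = 0` for all `i`
is the zero family. -/
def IsStablePair {I H : Type*} (out inc : H → I)
    (V : I → Type*) [∀ i, AddCommGroup (V i)] [∀ i, Module ℂ (V i)]
    (D : I → Type*) [∀ i, AddCommGroup (D i)] [∀ i, Module ℂ (D i)]
    (x : ∀ h, V (out h) →ₗ[ℂ] V (inc h)) (t : ∀ i, V i →ₗ[ℂ] D i) : Prop :=
  ∀ S : ∀ i, Submodule ℂ (V i),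
    (∀ h, ∀ v ∈ S (out h), x h v ∈ S (inc h)) →
    (∀ i, ∀ v ∈ S i, t i v = 0) →
    ∀ i, S i = ⊥

/-- If `(x, t)` is stable and `g = (g_i)` is a family of linear
automorphisms with `g (inc h) ∘ x h = x h ∘ g (out h)` for all `h` and
`t i ∘ g i = t i` for all `i`, then `g i` is the identity for every `i`:
the stabilizer in `G_V = ∏ GL(V_i)` of a stable point is trivial. -/
theorem stabilizer_of_stable_point_trivial
    {I H : Type*} (out inc : H → I)
    (V : I → Type*) [∀ i, AddCommGroup (V i)] [∀ i, Module ℂ (V i)]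
    [∀ i, FiniteDimensional ℂ (V i)]
    (D : I → Type*) [∀ i, AddCommGroup (D i)] [∀ i, Module ℂ (D i)]
    [∀ i, FiniteDimensional ℂ (D i)]
    (x : ∀ h, V (out h) →ₗ[ℂ] V (inc h)) (t : ∀ i, V i →ₗ[ℂ] D i)
    (hstable : IsStablePair out inc V D x t)
    (g : ∀ i, V i ≃ₗ[ℂ] V i)
    (hgx : ∀ h, ∀ v : V (out h), g (inc h) (x h v) = x h (g (out h) v))
    (hgt : ∀ i, ∀ v : V i, t i (g i v) = t i v) :
    ∀ i, ∀ v : V i, g i v = v := by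
  intro i v
  have key := hstable
    (fun j => LinearMap.range ((g j : V j →ₗ[ℂ] V j) - LinearMap.id))
    (by
      rintro h _ ⟨w, rfl⟩
      exact ⟨x h w, by simp [hgx]⟩)
    (by
      rintro j _ ⟨w, rfl⟩
      simp [hgt]) i
  have hv : (g i : V i →ₗ[ℂ] V i) v - v ∈
      LinearMap.range ((g i : V i →ₗ[ℂ] V i) - LinearMap.id) := ⟨v, by simp⟩
  rw [key] at hv
  have := (Submodule.mem_bot ℂ).mp hv
  simpa [sub_eq_zero] using this
end

section
/- Let I be a finite set, H a finite set with maps out, inc : H → I, a fixed-point-free involution h ↦ h̄ with out(h̄) = inc(h) and inc(h̄) = out(h), and ε : H → {1, −1} with ε(h̄) = −ε(h). Let (V_i)_{i∈I} be finite-dimensional complex vector spaces, let ⟨x,y⟩ = Σ_{h∈H} ε(h)·tr(x_h ∘ y_{h̄}), and define, for a = (a_i)_{i∈I} with a_i ∈ End(V_i) and x ∈ E_V, the family [a,x] ∈ E_V by [a,x]_h = a_{inc(h)} ∘ x_h − x_h ∘ a_{out(h)}, and the moment map components ψ_i(x) = Σ_{h∈H : inc(h)=i} ε(h)·x_h ∘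 x_{h̄} ∈ End(V_i). Then for all such a and all x ∈ E_V, ⟨[a,x], x⟩ = 2·Σ_{i∈I} tr(a_i ∘ ψ_i(x)). -/
open LinearMap

private lemma trace_comp_cast_eq {I : Type*} (V : I → Type*) [∀ i, AddCommGroup (V i)]
    [∀ i, Module ℂ (V i)] {i j : I} (e : i = j)
    (p : (V i →ₗ[ℂ] V i) = (V j →ₗ[ℂ] V j))
    (a : ∀ i, V i →ₗ[ℂ] V i) (f : V i →ₗ[ℂ] V i) :
    trace ℂ (V j) ((a j).comp (cast p f)) = trace ℂ (V i) ((a i).comp f) := by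
  subst e; rfl

private lemma trace_swap {I : Type*} (V : I → Type*) [∀ i, AddCommGroup (V i)]
    [∀ i, Module ℂ (V i)] [∀ i, FiniteDimensional ℂ (V i)]
    {i j i1 j1 i2 j2 : I} (ei1 : i1 = i) (ej1 : j1 = j) (ei2 : i2 = j1) (ej2 : j2 = i1)
    (p : (V i2 →ₗ[ℂ] V j2) = (V j1 →ₗ[ℂ] V i1))
    (p' : (V i1 →ₗ[ℂ] V j1) = (V i →ₗ[ℂ] V j))
    (u : V j →ₗ[ℂ] V i) (w : V i1 →ₗ[ℂ] V j1) (v : V i2 →ₗ[ℂ] V j2)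
    (hv : HEq v u) (A : V i →ₗ[ℂ] V i) (A1 : V i1 →ₗ[ℂ] V i1) (hA : HEq A1 A) :
    trace ℂ (V j1) ((w.comp A1).comp (cast p v)) =
      trace ℂ (V i) (A.comp (u.comp (cast p' w))) := by
  subst ei1; subst ej1; subst ei2; subst ej2
  rw [eq_of_heq hv, eq_of_heq hA, show cast p u = u from rfl, show cast p' w = w from rfl,
    comp_assoc, trace_comp_comm', comp_assoc]


/-- The symplectic form `⟨x, y⟩ = ∑_{h ∈ H} ε h · tr (x h ∘ y (bar h))` on `E_V`. -/
noncomputable def quiverForm {I H : Type*} [Fintype H]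
    (out inc : H → I) (bar : H → H) (eps : H → ℤ)
    (V : I → Type*) [∀ i, AddCommGroup (V i)] [∀ i, Module ℂ (V i)]
    (hbar_out : ∀ h, out (bar h) = inc h) (hbar_inc : ∀ h, inc (bar h) = out h)
    (x y : ∀ h, V (out h) →ₗ[ℂ] V (inc h)) : ℂ :=
  ∑ h : H, (eps h : ℂ) *
    LinearMap.trace ℂ (V (inc h))
      ((x h).comp
        (cast (by rw [hbar_out h, hbar_inc h]) (y (bar h)) : V (inc h) →ₗ[ℂ] V (out h)))

/-- The `i`-th component `ψ_i (x) = ∑_{h : inc h = i} ε h · x h ∘ x (bar h)` of the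
moment map on `E_V`. -/
noncomputable def quiverMomentMap {I H : Type*} [Fintype H] [DecidableEq I]
    (out inc : H → I) (bar : H → H) (eps : H → ℤ)
    (V : I → Type*) [∀ i, AddCommGroup (V i)] [∀ i, Module ℂ (V i)]
    (hbar_out : ∀ h, out (bar h) = inc h) (hbar_inc : ∀ h, inc (bar h) = out h)
    (x : ∀ h, V (out h) →ₗ[ℂ] V (inc h)) (i : I) : V i →ₗ[ℂ] V i :=
  ∑ h : {h : H // inc h = i}, (eps h.1 : ℂ) •
    (cast (by rw [h.2])
      ((x h.1).comp
        (cast (by rw [hbar_out h.1, hbar_inc h.1]) (x (bar h.1)) :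
          V (inc h.1) →ₗ[ℂ] V (out h.1))) : V i →ₗ[ℂ] V i)

/-- For `a = (a_i) ∈ gl_V` acting on `E_V` by
`[a, x] h = a (inc h) ∘ x h - x h ∘ a (out h)`, one has
`⟨[a, x], x⟩ = 2 ∑_i tr (a i ∘ ψ_i (x))`: the map `ψ = (ψ_i)` is the moment map for
the `G_V`-action on the symplectic vector space `(E_V, ⟨·,·⟩)`. -/
theorem quiverForm_bracket_eq_moment_map
    {I H : Type*} [Fintype I] [Fintype H] [DecidableEq I]
    (out inc : H → I) (bar : H → H) (eps : H → ℤ)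
    (hbar_invol : ∀ h, bar (bar h) = h) (hbar_ne : ∀ h, bar h ≠ h)
    (hbar_out : ∀ h, out (bar h) = inc h) (hbar_inc : ∀ h, inc (bar h) = out h)
    (heps : ∀ h, eps h = 1 ∨ eps h = -1) (heps_bar : ∀ h, eps (bar h) = -eps h)
    (V : I → Type*) [∀ i, AddCommGroup (V i)] [∀ i, Module ℂ (V i)]
    [∀ i, FiniteDimensional ℂ (V i)]
    (a : ∀ i, V i →ₗ[ℂ] V i)
    (x : ∀ h, V (out h) →ₗ[ℂ] V (inc h)) :
    quiverForm out inc bar eps V hbar_out hbar_inc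
        (fun h => (a (inc h)).comp (x h) - (x h).comp (a (out h))) x
      = 2 * ∑ i : I, LinearMap.trace ℂ (V i)
          ((a i).comp
            (quiverMomentMap out inc bar eps V hbar_out hbar_inc x i)) := by
  classical
  have hsplit : quiverForm out inc bar eps V hbar_out hbar_inc
      (fun h => (a (inc h)).comp (x h) - (x h).comp (a (out h))) x
      = (∑ h : H, (eps h : ℂ) * LinearMap.trace ℂ (V (inc h)) ((a (inc h)).comp ((x h).comp
          (cast (by rw [hbar_out h, hbar_inc h]) (x (bar h)) : V (inc h) →ₗ[ℂ] V (out h)))))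
        - ∑ h : H, (eps h : ℂ) * LinearMap.trace ℂ (V (inc h)) (((x h).comp (a (out h))).comp
          (cast (by rw [hbar_out h, hbar_inc h]) (x (bar h)) : V (inc h) →ₗ[ℂ] V (out h))) := by
    unfold quiverForm
    rw [← Finset.sum_sub_distrib]
    refine Finset.sum_congr rfl fun h _ => ?_
    rw [LinearMap.sub_comp, map_sub, mul_sub, LinearMap.comp_assoc]
  have hG : (∑ h : H, (eps h : ℂ) * LinearMap.trace ℂ (V (inc h))
        (((x h).comp (a (out h))).comp
          (cast (by rw [hbar_out h, hbar_inc h]) (x (bar h)) : V (inc h) →ₗ[ℂ] V (out h))))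
      = - ∑ h : H, (eps h : ℂ) * LinearMap.trace ℂ (V (inc h)) ((a (inc h)).comp ((x h).comp
          (cast (by rw [hbar_out h, hbar_inc h]) (x (bar h)) : V (inc h) →ₗ[ℂ] V (out h)))) := by
    rw [← Equiv.sum_comp (Equiv.mk bar bar hbar_invol hbar_invol)
      (fun h => (eps h : ℂ) * LinearMap.trace ℂ (V (inc h))
        (((x h).comp (a (out h))).comp
          (cast (by rw [hbar_out h, hbar_inc h]) (x (bar h)) : V (inc h) →ₗ[ℂ] V (out h)))),
      ← Finset.sum_neg_distrib]
    refine Finset.sum_congr rfl fun h _ => ?_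
    simp only [Equiv.coe_fn_mk]
    rw [trace_swap V (hbar_out h) (hbar_inc h) (hbar_out (bar h)) (hbar_inc (bar h)) _ (by rw [hbar_out h, hbar_inc h])
      (x h) (x (bar h)) (x (bar (bar h))) (by rw [hbar_invol h]) (a (inc h)) (a (out (bar h)))
      (by rw [hbar_out h]), heps_bar h]
    push_cast
    ring
  have hR : ∀ i : I, LinearMap.trace ℂ (V i)
        ((a i).comp (quiverMomentMap out inc bar eps V hbar_out hbar_inc x i))
      = ∑ h : {h : H // inc h = i}, (eps h.1 : ℂ) * LinearMap.trace ℂ (V (inc h.1))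
          ((a (inc h.1)).comp ((x h.1).comp
            (cast (by rw [hbar_out h.1, hbar_inc h.1]) (x (bar h.1)) :
              V (inc h.1) →ₗ[ℂ] V (out h.1)))) := by
    intro i
    unfold quiverMomentMap
    refine Eq.trans (map_sum ((LinearMap.trace ℂ (V i)).comp
      (LinearMap.llcomp ℂ (V i) (V i) (V i) (a i))) _ Finset.univ) ?_
    refine Finset.sum_congr rfl fun h _ => ?_
    rw [map_smul, smul_eq_mul]
    congr 1
    exact trace_comp_cast_eq V h.2 _ a _
  rw [hsplit, hG, sub_neg_eq_add, Finset.sum_congr rfl fun i _ => hR i,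
    Fintype.sum_fiberwise inc (fun h => (eps h : ℂ) * LinearMap.trace ℂ (V (inc h))
      ((a (inc h)).comp ((x h).comp
        (cast (by rw [hbar_out h, hbar_inc h]) (x (bar h)) : V (inc h) →ₗ[ℂ] V (out h)))))]
  ring
end
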